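/- If ψ is a state invariant of an LPE P and ψ holds in the initial state ι, then P(ι) is strongly bisimilar to the restricted LPE P^{ψ,J}(ι) obtained by strengthening the guards of the summands in any subset J of summand indices with ψ. -/
import Mathlib


/-- A bisimulation between two LTSs with transition relations `tr1` and `tr2`. -/
def IsBisimulationBetween {S T Act : Type*}
    (tr1 : S → Act → S → Prop) (tr2 : T → Act → T → Prop) (R : S → T → Prop) : Prop :=
  ∀ s t, R s t →
    (∀ a s', tr1 s a s' → ∃ t', tr2 t a t' ∧ R s' t') ∧
    (∀ a t', tr2 t a t' → ∃ s', tr1 s a s' ∧ R s' t')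

def BisimilarBetween {S T Act : Type*}
    (tr1 : S → Act → S → Prop) (tr2 : T → Act → T → Prop) (s : S) (t : T) : Prop :=
  ∃ R, IsBisimulationBetween tr1 tr2 R ∧ R s t

/-- The LTS induced by an LPE with guards `c`, actions `α` and updates `g`. -/
def LpeTr {D Act : Type*} {I : Type*} {E : I → Type*}
    (c : ∀ i, D → E i → Bool) (α : ∀ i, D → E i → Act) (g : ∀ i, D → E i → D)
    (d : D) (a : Act) (d' : D) : Prop :=
  ∃ i e, c i d e = true ∧ a = α i d e ∧ d' = g i d e

theorem restricted_lpe_bisimilar {D Act : Type*} {I : Type*} {E : I → Type*}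
    (c : ∀ i, D → E i → Bool) (α : ∀ i, D → E i → Act) (g : ∀ i, D → E i → D)
    (ψ : D → Bool)
    (hinv : ∀ i (d : D) (e : E i), ψ d = true → c i d e = true → ψ (g i d e) = true)
    (J : Set I) [DecidablePred (· ∈ J)]
    (ι : D) (hι : ψ ι = true) :
    BisimilarBetween (LpeTr c α g)
      (LpeTr (fun i d e => if i ∈ J then c i d e && ψ d else c i d e) α g) ι ι := by
  refine ⟨fun d d' => d = d' ∧ ψ d = true, ?_, rfl, hι⟩
  rintro s t ⟨rfl, hs⟩
  constructor
  · rintro a s' ⟨i, e, hc, ha, hg⟩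
    exact ⟨s', ⟨i, e, by by_cases h : i ∈ J <;> simp [h, hc, hs], ha, hg⟩, rfl, hg ▸ hinv i s e hs hc⟩
  · rintro a t' ⟨i, e, hc, ha, hg⟩
    have hc' : c i s e = true := by by_cases h : i ∈ J <;> simp [h] at hc <;> simp [hc]
    exact ⟨t', ⟨i, e, hc', ha, hg⟩, rfl, hg ▸ hinv i s e hs hc'⟩
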